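/- Let a list of l items be initially ordered [a_1,…,a_l] and let σ_δ consist of m repetitions of the phase: a_1,…,a_l, then a_1,a_1,a_1,a_2,a_2,a_2,…,a_l,a_l,a_l, then a_l,a_{l−1},…,a_1, then a_l,a_l,a_l,a_{l−1},a_{l−1},a_{l−1},…,a_1,a_1,a_1. Under the full cost model, MTFO(σ_δ) = m·(5l² + 3l) and OPT(σ_δ) ≤ m·(2l² + 6l). -/

import Mathlib

namespace ListUpdate

variable {α : Type} [DecidableEq α]

/-- Swap the adjacent items at (0-based) positions `i` and `i+1`. -/
def adjSwap (L : List α) (i : ℕ) : List α :=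
  L.take i ++ (match L.drop i with
    | a :: b :: t => b :: a :: t
    | t => t)

/-- An offline action for one request: a sequence of paid exchanges performed
before the access (each given by the position of the swapped pair), and the
target position for the free exchange performed after the access. -/
structure Action (α : Type) where
  paid : List ℕ
  target : ℕ

def doPaid (L : List α) (ps : List ℕ) : List α := ps.foldl adjSwap L

/-- Move item `r` (for free) to position `min j (current position)`,
i.e. to any position not farther from the front. -/
def freeMove (L : List α) (r : α) (j : ℕ) : List α :=
  (L.erase r).insertIdx (min j (L.idxOf r)) r

/-- Cost of one offline step: one unit per paid exchange plus the access cost;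
`c = 1` gives the full cost model, `c = 0` the partial cost model. -/
def stepCost (c : ℕ) (L : List α) (r : α) (a : Action α) : ℕ :=
  a.paid.length + ((doPaid L a.paid).idxOf r + c)

def stepList (L : List α) (r : α) (a : Action α) : List α :=
  freeMove (doPaid L a.paid) r a.target

/-- Total cost of serving the request sequence with the given actions. -/
def serveCost (c : ℕ) : List α → List α → List (Action α) → ℕ
  | _, [], _ => 0
  | _, _ :: _, [] => 0
  | L, r :: σ, a :: as => stepCost c L r a + serveCost c (stepList L r a) σ as

/-- The list configuration after serving the requests with the given actions. -/
def serveList : List α → List α → List (Action α) → List α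
  | L, [], _ => L
  | L, _ :: _, [] => L
  | L, r :: σ, a :: as => serveList (stepList L r a) σ as

/-- `optCost c L σ` : the optimal offline cost of serving `σ` starting from list `L`. -/
noncomputable def optCost (c : ℕ) (L : List α) (σ : List α) : ℕ :=
  sInf { n | ∃ as : List (Action α), as.length = σ.length ∧ serveCost c L σ as = n }

/-- Cost of an MTF2 (move-to-front-every-other-access) algorithm: it keeps one bit
per item; on each request the requested item's bit is flipped and the item is moved
to the front exactly when the bit becomes `false` (i.e. 0). -/
def mtf2Cost (c : ℕ) : (α → Bool) → List α → List α → ℕ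
  | _, _, [] => 0
  | bits, L, r :: σ =>
    (L.idxOf r + c) +
      mtf2Cost c (Function.update bits r (!bits r))
        (if !bits r then L else r :: L.erase r) σ

/-- Final list of an MTF2 algorithm. -/
def mtf2List : (α → Bool) → List α → List α → List α
  | _, L, [] => L
  | bits, L, r :: σ =>
      mtf2List (Function.update bits r (!bits r))
        (if !bits r then L else r :: L.erase r) σ

/-- MTFO moves the requested item to the front on every odd request to it:
this is MTF2 with all bits initially 1. -/
def mtfoCost (c : ℕ) (L σ : List α) : ℕ := mtf2Cost c (fun _ => true) L σ

/-- MTFE moves the requested item to the front on every even request to it: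
this is MTF2 with all bits initially 0. -/
def mtfeCost (c : ℕ) (L σ : List α) : ℕ := mtf2Cost c (fun _ => false) L σ

/-- One step of TS (Timestamp). `h` is the list of previous requests, most recent
first. The requested item `x` is inserted in front of the first item of the list
that precedes `x` and was requested at most once since the last request to `x`;
if there is no such item, or this is the first request to `x`, nothing moves. -/
def tsStep (h : List α) (L : List α) (x : α) : List α :=
  if x ∈ h then
    let cnt : α → ℕ := fun z => (h.takeWhile (fun w => decide (w ≠ x))).count z
    let pre := L.takeWhile (fun w => decide (w ≠ x))
    let keep := pre.takeWhile (fun z => decide (2 ≤ cnt z))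
    keep ++ x :: (pre.drop keep.length ++ (L.dropWhile (fun w => decide (w ≠ x))).tail)
  else L

/-- Cost of TS; `h` is the history of previous requests, most recent first
(initially `[]`). -/
def tsCost (c : ℕ) : List α → List α → List α → ℕ
  | _, _, [] => 0
  | h, L, r :: σ => (L.idxOf r + c) + tsCost c (r :: h) (tsStep h L r) σ

/-- An online algorithm with advice: its action may depend on the advice tape and
on the sequence of requests seen so far (ending with the current request). -/
def OnlineAdviceAlg (α : Type) := (ℕ → Bool) → List α → Action α

/-- Total cost of running the online algorithm `A` with advice tape `φ`:
`past` is the reversed-free list of requests served so far (oldest first). -/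
def runAdvCost (c : ℕ) (A : OnlineAdviceAlg α) (φ : ℕ → Bool) :
    List α → List α → List α → ℕ
  | _, _, [] => 0
  | past, L, r :: σ =>
      stepCost c L r (A φ (past ++ [r])) +
        runAdvCost c A φ (past ++ [r]) (stepList L r (A φ (past ++ [r]))) σ

/-- `A`, run on `σ` with tape `φ`, reads at most the first `k` bits of advice:
its behaviour on every step of `σ` is unchanged if the tape is modified
beyond position `k`. -/
def UsesAdvice (A : OnlineAdviceAlg α) (φ : ℕ → Bool) (σ : List α) (k : ℕ) : Prop :=
  ∀ ψ : ℕ → Bool, (∀ i < k, ψ i = φ i) →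
    ∀ t, 0 < t → t ≤ σ.length → A ψ (σ.take t) = A φ (σ.take t)

end ListUpdate

open ListUpdate

/-- Each item of `l` repeated `k` times, in order. -/
def dupEach (k : ℕ) (l : List ℕ) : List ℕ :=
  (l.map (fun i => List.replicate k i)).flatten

/-- One phase of `σ_δ`: `a_1,…,a_l`, then `a_1,a_1,a_1,…,a_l,a_l,a_l`, then
`a_l,…,a_1`, then `a_l,a_l,a_l,…,a_1,a_1,a_1` (items are `0,…,l-1`). -/
def phaseDelta (l : ℕ) : List ℕ :=
  List.range l ++ dupEach 3 (List.range l) ++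
    (List.range l).reverse ++ dupEach 3 ((List.range l).reverse)

/-- `σ_δ`: `m` repetitions of the phase. -/
def sigmaDelta (l m : ℕ) : List ℕ := (List.replicate m (phaseDelta l)).flatten

namespace ListUpdate
variable {α : Type} [DecidableEq α]

def mtf2Bits : (α → Bool) → List α → (α → Bool)
  | bits, [] => bits
  | bits, r :: σ => mtf2Bits (Function.update bits r (!bits r)) σ

lemma mtf2Cost_append (c : ℕ) (bits : α → Bool) (L : List α) (σ₁ σ₂ : List α) :
    mtf2Cost c bits L (σ₁ ++ σ₂) =
      mtf2Cost c bits L σ₁ + mtf2Cost c (mtf2Bits bits σ₁) (mtf2List bits L σ₁) σ₂ := by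
  induction σ₁ generalizing bits L with
  | nil => simp [mtf2Cost, mtf2Bits, mtf2List]
  | cons r σ ih => simp [mtf2Cost, mtf2Bits, mtf2List, ih, Nat.add_assoc]

lemma mtf2List_append (bits : α → Bool) (L : List α) (σ₁ σ₂ : List α) :
    mtf2List bits L (σ₁ ++ σ₂) = mtf2List (mtf2Bits bits σ₁) (mtf2List bits L σ₁) σ₂ := by
  induction σ₁ generalizing bits L with
  | nil => simp [mtf2Bits, mtf2List]
  | cons r σ ih => simp [mtf2Bits, mtf2List, ih]

lemma mtf2Bits_append (bits : α → Bool) (σ₁ σ₂ : List α) :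
    mtf2Bits bits (σ₁ ++ σ₂) = mtf2Bits (mtf2Bits bits σ₁) σ₂ := by
  induction σ₁ generalizing bits with
  | nil => simp [mtf2Bits]
  | cons r σ ih => simp [mtf2Bits, ih]

lemma mtf2Cost_step_true {bits : α → Bool} {r : α} {p c : ℕ} {L σ : List α}
    (hb : bits r = true) (hidx : L.idxOf r = p) :
    mtf2Cost c bits L (r :: σ) =
      (p + c) + mtf2Cost c (Function.update bits r false) (r :: L.erase r) σ := by
  simp [mtf2Cost, hb, hidx]

lemma mtf2Cost_step_false {bits : α → Bool} {r : α} {p c : ℕ} {L σ : List α}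
    (hb : bits r = false) (hidx : L.idxOf r = p) :
    mtf2Cost c bits L (r :: σ) =
      (p + c) + mtf2Cost c (Function.update bits r true) L σ := by
  simp [mtf2Cost, hb, hidx]

lemma mtf2List_step_true {bits : α → Bool} {r : α} {L σ : List α} (hb : bits r = true) :
    mtf2List bits L (r :: σ) = mtf2List (Function.update bits r false) (r :: L.erase r) σ := by
  simp [mtf2List, hb]

lemma mtf2List_step_false {bits : α → Bool} {r : α} {L σ : List α} (hb : bits r = false) :
    mtf2List bits L (r :: σ) = mtf2List (Function.update bits r true) L σ := by
  simp [mtf2List, hb]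

lemma mtf2Bits_step_true {bits : α → Bool} {r : α} (σ : List α) (hb : bits r = true) :
    mtf2Bits bits (r :: σ) = mtf2Bits (Function.update bits r false) σ := by
  simp [mtf2Bits, hb]

lemma mtf2Bits_step_false {bits : α → Bool} {r : α} (σ : List α) (hb : bits r = false) :
    mtf2Bits bits (r :: σ) = mtf2Bits (Function.update bits r true) σ := by
  simp [mtf2Bits, hb]

lemma serveCost_step (c : ℕ) (L : List α) (r : α) (σ : List α) (t : ℕ) (as : List (Action α)) :
    serveCost c L (r :: σ) (⟨[], t⟩ :: as) =
      (L.idxOf r + c) + serveCost c (freeMove L r t) σ as := by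
  simp [serveCost, stepCost, stepList, doPaid]

lemma serveList_step (L : List α) (r : α) (σ : List α) (t : ℕ) (as : List (Action α)) :
    serveList L (r :: σ) (⟨[], t⟩ :: as) = serveList (freeMove L r t) σ as := by
  simp [serveList, stepList, doPaid]

lemma serveCost_append (c : ℕ) (L : List α) (σ₁ σ₂ : List α) (as₁ as₂ : List (Action α))
    (h : as₁.length = σ₁.length) :
    serveCost c L (σ₁ ++ σ₂) (as₁ ++ as₂) =
      serveCost c L σ₁ as₁ + serveCost c (serveList L σ₁ as₁) σ₂ as₂ := by
  induction σ₁ generalizing as₁ L with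
  | nil => simp at h; subst h; simp [serveCost, serveList]
  | cons r σ ih =>
    match as₁ with
    | a :: as => simp [serveCost, serveList, ih _ _ (by simpa using h), Nat.add_assoc]

lemma serveList_append (L : List α) (σ₁ σ₂ : List α) (as₁ as₂ : List (Action α))
    (h : as₁.length = σ₁.length) :
    serveList L (σ₁ ++ σ₂) (as₁ ++ as₂) = serveList (serveList L σ₁ as₁) σ₂ as₂ := by
  induction σ₁ generalizing as₁ L with
  | nil => simp at h; subst h; simp [serveList]
  | cons r σ ih =>
    match as₁ with
    | a :: as => simp [serveList, ih _ _ (by simpa using h)]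

lemma insertIdx_erase_indexOf {r : α} {L : List α} (h : r ∈ L) :
    (L.erase r).insertIdx (L.idxOf r) r = L := by
  induction L with
  | nil => simp at h
  | cons a t ih =>
    by_cases hr : a = r
    · subst hr; simp [List.idxOf_cons_self]
    · rw [List.erase_cons_tail, List.idxOf_cons_ne _ (by simpa using hr)]
      · simp only [List.insertIdx_succ_cons]
        rw [ih ((List.mem_cons.mp h).resolve_left (fun e => hr e.symm))]
      · simp [hr]

lemma freeMove_self {r : α} {L : List α} {p : ℕ} (h : r ∈ L) (hidx : L.idxOf r = p) :
    freeMove L r p = L := by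
  rw [freeMove, hidx, Nat.min_self, ← hidx, insertIdx_erase_indexOf h]

lemma freeMove_front (L : List α) (r : α) : freeMove L r 0 = r :: L.erase r := by
  simp [freeMove]

lemma indexOf_middle {x : α} {L₁ L₂ : List α} (h : x ∉ L₁) :
    (L₁ ++ x :: L₂).idxOf x = L₁.length := by
  rw [List.idxOf_append_of_notMem h]; simp

lemma erase_middle {x : α} {L₁ L₂ : List α} (h : x ∉ L₁) :
    (L₁ ++ x :: L₂).erase x = L₁ ++ L₂ := by
  rw [List.erase_append_right _ h]; simp

end ListUpdate
namespace ListUpdate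
open List

lemma range_decomp (n k : ℕ) : range (n + k) = range n ++ range' n k := by
  rw [range_eq_range', range_eq_range']
  have := List.range'_append (s := 0) (m := n) (n := k) (step := 1)
  simpa [Nat.add_comm] using this.symm

lemma update_decide (P Q : ℕ → Prop) [DecidablePred P] [DecidablePred Q] (n : ℕ) (b : Bool)
    (hn : Q n ↔ b = true) (h : ∀ j, j ≠ n → (P j ↔ Q j)) :
    Function.update (fun j => decide (P j)) n b = fun j => decide (Q j) := by
  funext j
  rcases eq_or_ne j n with rfl | hj
  · simp only [Function.update_self]
    cases b <;> simp_all
  · simp only [Function.update_apply, if_neg hj]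
    rw [decide_eq_decide]
    exact h j hj

lemma segA (k : ℕ) : ∀ n : ℕ,
    2 * mtf2Cost 1 (fun j => decide (n ≤ j)) ((range n).reverse ++ range' n k) (range' n k)
        = 2*n*k + k*(k+1)
    ∧ mtf2List (fun j => decide (n ≤ j)) ((range n).reverse ++ range' n k) (range' n k)
        = (range (n+k)).reverse
    ∧ mtf2Bits (fun j : ℕ => decide (n ≤ j)) (range' n k) = fun j => decide (n+k ≤ j) := by
  induction k with
  | zero => intro n; refine ⟨by simp [mtf2Cost], by simp [mtf2List], by simp [mtf2Bits]⟩
  | succ k ih =>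
    intro n
    have hσ : range' n (k+1) = n :: range' (n+1) k := List.range'_succ (s := n) (n := k) (step := 1)
    have hnm : n ∉ (range n).reverse := by simp
    have hidx : ((range n).reverse ++ n :: range' (n+1) k).idxOf n = n := by
      rw [indexOf_middle hnm]; simp
    have hb : (fun j : ℕ => decide (n ≤ j)) n = true := by simp
    have herase : ((range n).reverse ++ n :: range' (n+1) k).erase n
        = (range n).reverse ++ range' (n+1) k := erase_middle hnm
    have hl : (n :: ((range n).reverse ++ range' (n+1) k) : List ℕ)
        = (range (n+1)).reverse ++ range' (n+1) k := by simp [List.range_succ]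
    have hup : Function.update (fun j : ℕ => decide (n ≤ j)) n false
        = fun j : ℕ => decide (n+1 ≤ j) :=
      update_decide _ _ _ _ (by simp) (fun j hj => by omega)
    refine ⟨?_, ?_, ?_⟩
    · rw [hσ, mtf2Cost_step_true (bits := fun j : ℕ => decide (n ≤ j)) (r := n) hb hidx, herase, hl, hup, Nat.mul_add, (ih (n+1)).1]
      ring
    · rw [hσ, mtf2List_step_true (bits := fun j : ℕ => decide (n ≤ j)) (r := n) hb, herase, hl, hup, (ih (n+1)).2.1]
      rw [show n + (k+1) = (n+1) + k by omega]
    · rw [hσ, mtf2Bits_step_true (bits := fun j : ℕ => decide (n ≤ j)) (r := n) _ hb, hup, (ih (n+1)).2.2]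
      rw [show n + (k+1) = (n+1) + k by omega]

end ListUpdate
namespace ListUpdate
open List

lemma dupEach_cons (x : ℕ) (L : List ℕ) :
    dupEach 3 (x :: L) = x :: x :: x :: dupEach 3 L := by
  simp [dupEach, List.replicate]

lemma segB (k : ℕ) : ∀ n : ℕ,
    mtf2Cost 1 (fun j => decide (j < n ∨ n+k ≤ j)) ((range n).reverse ++ (range' n k).reverse)
        (dupEach 3 (range' n k)) = k*(2*(n+k)+1)
    ∧ mtf2List (fun j => decide (j < n ∨ n+k ≤ j)) ((range n).reverse ++ (range' n k).reverse)
        (dupEach 3 (range' n k)) = (range (n+k)).reverse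
    ∧ mtf2Bits (fun j : ℕ => decide (j < n ∨ n+k ≤ j)) (dupEach 3 (range' n k))
        = fun _ => true := by
  induction k with
  | zero =>
    intro n
    refine ⟨by simp [mtf2Cost, dupEach], by simp [mtf2List, dupEach], ?_⟩
    simp only [dupEach, List.range', List.map_nil, List.flatten_nil, mtf2Bits]
    funext j; rw [decide_eq_true_eq]; omega
  | succ k ih =>
    intro n
    set b0 : ℕ → Bool := fun j => decide (j < n ∨ n+(k+1) ≤ j) with hb0def
    have hσ : dupEach 3 (range' n (k+1)) = n :: n :: n :: dupEach 3 (range' (n+1) k) := by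
      rw [List.range'_succ (s := n) (n := k) (step := 1), dupEach_cons]
    have hP : n ∉ (range n).reverse ++ (range' (n+1) k).reverse := by
      simp; all_goals omega
    have hL : ((range n).reverse ++ (range' n (k+1)).reverse : List ℕ)
        = ((range n).reverse ++ (range' (n+1) k).reverse) ++ [n] := by
      rw [List.range'_succ (s := n) (n := k) (step := 1)]; simp
    have hidx : (((range n).reverse ++ (range' (n+1) k).reverse) ++ [n]).idxOf n = n + k := by
      rw [indexOf_middle hP]; simp
    have herase : (((range n).reverse ++ (range' (n+1) k).reverse) ++ [n]).erase n
        = (range n).reverse ++ (range' (n+1) k).reverse := by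
      rw [erase_middle hP]; simp
    have hb0 : b0 n = false := by
      simp only [hb0def, decide_eq_false_iff_not]; omega
    have hb1 : (Function.update b0 n true) n = true := by simp
    have hb2 : (Function.update (Function.update b0 n true) n false) n = false := by simp
    have hidx0 : ((n : ℕ) :: ((range n).reverse ++ (range' (n+1) k).reverse)).idxOf n = 0 :=
      List.idxOf_cons_self
    have hl : ((n : ℕ) :: ((range n).reverse ++ (range' (n+1) k).reverse))
        = (range (n+1)).reverse ++ (range' (n+1) k).reverse := by
      simp [List.range_succ]
    have hup : Function.update (Function.update (Function.update b0 n true) n false) n true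
        = fun j : ℕ => decide (j < n+1 ∨ (n+1)+k ≤ j) := by
      funext j
      rcases eq_or_ne j n with rfl | hj
      · simp only [Function.update_self]; symm; rw [decide_eq_true_eq]; omega
      · simp only [Function.update_apply, if_neg hj, hb0def]
        rw [decide_eq_decide]; omega
    refine ⟨?_, ?_, ?_⟩
    · rw [hσ, hL, mtf2Cost_step_false (bits := b0) (r := n) hb0 hidx,
        mtf2Cost_step_true (bits := Function.update b0 n true) (r := n) hb1 hidx, herase,
        mtf2Cost_step_false (bits := Function.update (Function.update b0 n true) n false)
          (r := n) hb2 hidx0, hl, hup, (ih (n+1)).1]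
      ring
    · rw [hσ, hL, mtf2List_step_false (bits := b0) (r := n) hb0,
        mtf2List_step_true (bits := Function.update b0 n true) (r := n) hb1, herase,
        mtf2List_step_false (bits := Function.update (Function.update b0 n true) n false)
          (r := n) hb2, hl, hup, (ih (n+1)).2.1]
      rw [show n + (k+1) = (n+1) + k by omega]
    · rw [hσ, mtf2Bits_step_false (bits := b0) (r := n) _ hb0,
        mtf2Bits_step_true (bits := Function.update b0 n true) (r := n) _ hb1,
        mtf2Bits_step_false (bits := Function.update (Function.update b0 n true) n false)
          (r := n) _ hb2, hup, (ih (n+1)).2.2]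

lemma segC (n : ℕ) : ∀ k : ℕ,
    2 * mtf2Cost 1 (fun j => decide (j < n ∨ n+k ≤ j)) (range' n k ++ (range n).reverse)
        ((range n).reverse) = 2*n*k + n*(n+1)
    ∧ mtf2List (fun j => decide (j < n ∨ n+k ≤ j)) (range' n k ++ (range n).reverse)
        ((range n).reverse) = range (n+k)
    ∧ mtf2Bits (fun j : ℕ => decide (j < n ∨ n+k ≤ j)) ((range n).reverse)
        = fun j => decide (n+k ≤ j) := by
  induction n with
  | zero =>
    intro k
    refine ⟨by simp [mtf2Cost], by simp [mtf2List, range_eq_range'], ?_⟩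
    simp only [List.range_zero, List.reverse_nil, mtf2Bits]
    funext j; rw [decide_eq_decide]; omega
  | succ n ih =>
    intro k
    set b0 : ℕ → Bool := fun j => decide (j < n+1 ∨ (n+1)+k ≤ j) with hb0def
    have hσ : ((range (n+1)).reverse : List ℕ) = n :: (range n).reverse := by
      simp [List.range_succ]
    have hQ : n ∉ range' (n+1) k := by simp; all_goals omega
    have hL : (range' (n+1) k ++ (range (n+1)).reverse : List ℕ)
        = range' (n+1) k ++ n :: (range n).reverse := by rw [hσ]
    have hidx : (range' (n+1) k ++ n :: (range n).reverse).idxOf n = k := by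
      rw [indexOf_middle hQ]; simp
    have herase : (range' (n+1) k ++ n :: (range n).reverse).erase n
        = range' (n+1) k ++ (range n).reverse := erase_middle hQ
    have hb0 : b0 n = true := by
      simp only [hb0def, decide_eq_true_eq]; omega
    have hl : ((n : ℕ) :: (range' (n+1) k ++ (range n).reverse))
        = range' n (k+1) ++ (range n).reverse := by
      rw [List.range'_succ (s := n) (n := k) (step := 1)]; rfl
    have hup : Function.update b0 n false = fun j : ℕ => decide (j < n ∨ n+(k+1) ≤ j) := by
      funext j
      rcases eq_or_ne j n with rfl | hj
      · simp only [Function.update_self]; symm; rw [decide_eq_false_iff_not]; omega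
      · simp only [Function.update_apply, if_neg hj, hb0def]
        rw [decide_eq_decide]; omega
    refine ⟨?_, ?_, ?_⟩
    · rw [hσ, mtf2Cost_step_true (bits := b0) (r := n) hb0 hidx, herase, hl, hup,
        Nat.mul_add, (ih (k+1)).1]
      ring
    · rw [hσ, mtf2List_step_true (bits := b0) (r := n) hb0, herase, hl, hup,
        (ih (k+1)).2.1]
      rw [show (n+1) + k = n + (k+1) by omega]
    · rw [hσ, mtf2Bits_step_true (bits := b0) (r := n) _ hb0, hup, (ih (k+1)).2.2]
      rw [show (n+1) + k = n + (k+1) by omega]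

lemma segD (n : ℕ) : ∀ k : ℕ,
    mtf2Cost 1 (fun j => decide (n ≤ j)) (range' n k ++ range n)
        (dupEach 3 ((range n).reverse)) = n*(2*(n+k)+1)
    ∧ mtf2List (fun j => decide (n ≤ j)) (range' n k ++ range n)
        (dupEach 3 ((range n).reverse)) = range (n+k)
    ∧ mtf2Bits (fun j : ℕ => decide (n ≤ j)) (dupEach 3 ((range n).reverse))
        = fun _ => true := by
  induction n with
  | zero =>
    intro k
    refine ⟨by simp [mtf2Cost, dupEach], by simp [mtf2List, dupEach, range_eq_range'], ?_⟩
    simp only [List.range_zero, List.reverse_nil, dupEach, List.map_nil, List.flatten_nil,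
      mtf2Bits]
    funext j; simp
  | succ n ih =>
    intro k
    set b0 : ℕ → Bool := fun j => decide (n+1 ≤ j) with hb0def
    have hσ : dupEach 3 ((range (n+1)).reverse)
        = n :: n :: n :: dupEach 3 ((range n).reverse) := by
      rw [show ((range (n+1)).reverse : List ℕ) = n :: (range n).reverse by simp [List.range_succ],
        dupEach_cons]
    have hP : n ∉ range' (n+1) k ++ range n := by simp; all_goals omega
    have hL : (range' (n+1) k ++ range (n+1) : List ℕ)
        = (range' (n+1) k ++ range n) ++ [n] := by
      rw [List.range_succ, ← List.append_assoc]
    have hidx : ((range' (n+1) k ++ range n) ++ [n]).idxOf n = k + n := by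
      rw [indexOf_middle hP]; simp
    have herase : ((range' (n+1) k ++ range n) ++ [n]).erase n
        = range' (n+1) k ++ range n := by
      rw [erase_middle hP]; simp
    have hb0 : b0 n = false := by
      simp only [hb0def, decide_eq_false_iff_not]; omega
    have hb1 : (Function.update b0 n true) n = true := by simp
    have hb2 : (Function.update (Function.update b0 n true) n false) n = false := by simp
    have hidx0 : ((n : ℕ) :: (range' (n+1) k ++ range n)).idxOf n = 0 :=
      List.idxOf_cons_self
    have hl : ((n : ℕ) :: (range' (n+1) k ++ range n)) = range' n (k+1) ++ range n := by
      rw [List.range'_succ (s := n) (n := k) (step := 1)]; rfl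
    have hup : Function.update (Function.update (Function.update b0 n true) n false) n true
        = fun j : ℕ => decide (n ≤ j) := by
      funext j
      rcases eq_or_ne j n with rfl | hj
      · simp only [Function.update_self]; symm; rw [decide_eq_true_eq]
      · simp only [Function.update_apply, if_neg hj, hb0def]
        rw [decide_eq_decide]; omega
    refine ⟨?_, ?_, ?_⟩
    · rw [hσ, hL, mtf2Cost_step_false (bits := b0) (r := n) hb0 hidx,
        mtf2Cost_step_true (bits := Function.update b0 n true) (r := n) hb1 hidx, herase,
        mtf2Cost_step_false (bits := Function.update (Function.update b0 n true) n false)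
          (r := n) hb2 hidx0, hl, hup, (ih (k+1)).1]
      ring
    · rw [hσ, hL, mtf2List_step_false (bits := b0) (r := n) hb0,
        mtf2List_step_true (bits := Function.update b0 n true) (r := n) hb1, herase,
        mtf2List_step_false (bits := Function.update (Function.update b0 n true) n false)
          (r := n) hb2, hl, hup, (ih (k+1)).2.1]
      rw [show n + 1 + k = n + (k+1) by omega]
    · rw [hσ, mtf2Bits_step_false (bits := b0) (r := n) _ hb0,
        mtf2Bits_step_true (bits := Function.update b0 n true) (r := n) _ hb1,
        mtf2Bits_step_false (bits := Function.update (Function.update b0 n true) n false)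
          (r := n) _ hb2, hup, (ih (k+1)).2.2]

end ListUpdate
namespace ListUpdate
open List

lemma mtfo_phase (l : ℕ) :
    mtf2Cost 1 (fun _ => true) (range l) (phaseDelta l) = 5*l^2+3*l
    ∧ mtf2List (fun _ => true) (range l) (phaseDelta l) = range l
    ∧ mtf2Bits (fun _ => true : ℕ → Bool) (phaseDelta l) = (fun _ => true) := by
  have A := segA l 0
  have B := segB l 0
  have C := segC l 0
  have D := segD l 0
  simp only [Nat.zero_add, Nat.add_zero, Nat.mul_zero, Nat.zero_mul, List.range_zero,
    List.reverse_nil, List.nil_append, List.append_nil, List.range'_zero,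
    ← List.range_eq_range'] at A B C D
  rw [show (fun j : ℕ => decide ((0:ℕ) ≤ j)) = (fun _ : ℕ => true) by funext j; simp] at A
  rw [show (fun j : ℕ => decide (j < 0 ∨ l ≤ j)) = (fun j : ℕ => decide (l ≤ j)) by
    funext j; rw [decide_eq_decide]; omega] at B
  rw [show (fun j : ℕ => decide (j < l ∨ l ≤ j)) = (fun _ : ℕ => true) by
    funext j; rw [decide_eq_true_eq]; omega] at C
  have hφ : phaseDelta l = range l ++ (dupEach 3 (range l) ++
      ((range l).reverse ++ dupEach 3 ((range l).reverse))) := by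
    simp [phaseDelta]
  refine ⟨?_, ?_, ?_⟩
  · rw [hφ, mtf2Cost_append, A.2.2, A.2.1, mtf2Cost_append, B.2.2, B.2.1,
      mtf2Cost_append, C.2.2, C.2.1]
    apply Nat.eq_of_mul_eq_mul_left (show 0 < 2 by norm_num)
    calc 2*(mtf2Cost 1 (fun _ => true) (range l) (range l)
          + (mtf2Cost 1 (fun j : ℕ => decide (l ≤ j)) ((range l).reverse) (dupEach 3 (range l))
          + (mtf2Cost 1 (fun _ => true) ((range l).reverse) ((range l).reverse)
          + mtf2Cost 1 (fun j : ℕ => decide (l ≤ j)) (range l) (dupEach 3 ((range l).reverse)))))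
        = 2*(mtf2Cost 1 (fun _ => true) (range l) (range l))
          + 2*(mtf2Cost 1 (fun j : ℕ => decide (l ≤ j)) ((range l).reverse) (dupEach 3 (range l)))
          + 2*(mtf2Cost 1 (fun _ => true) ((range l).reverse) ((range l).reverse))
          + 2*(mtf2Cost 1 (fun j : ℕ => decide (l ≤ j)) (range l) (dupEach 3 ((range l).reverse)))
          := by ring
      _ = l*(l+1) + 2*(l*(2*l+1)) + (l*(l+1)) + 2*(l*(2*l+1)) := by
          rw [A.1, C.1, B.1, D.1]
      _ = 2*(5*l^2+3*l) := by ring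
  · rw [hφ, mtf2List_append, A.2.2, A.2.1, mtf2List_append, B.2.2, B.2.1,
      mtf2List_append, C.2.2, C.2.1, D.2.1]
  · rw [hφ, mtf2Bits_append, A.2.2, mtf2Bits_append, B.2.2, mtf2Bits_append, C.2.2, D.2.2]

lemma mtfo_total (l m : ℕ) :
    mtf2Cost 1 (fun _ => true) (range l) (sigmaDelta l m) = m*(5*l^2+3*l)
    ∧ mtf2List (fun _ => true) (range l) (sigmaDelta l m) = range l
    ∧ mtf2Bits (fun _ => true : ℕ → Bool) (sigmaDelta l m) = (fun _ => true) := by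
  induction m with
  | zero => exact ⟨by simp [sigmaDelta, mtf2Cost], by simp [sigmaDelta, mtf2List],
      by simp [sigmaDelta, mtf2Bits]⟩
  | succ m ih =>
    have hs : sigmaDelta l (m+1) = phaseDelta l ++ sigmaDelta l m := by
      simp [sigmaDelta, List.replicate_succ]
    have P := mtfo_phase l
    refine ⟨?_, ?_, ?_⟩
    · rw [hs, mtf2Cost_append, P.2.2, P.2.1, P.1, ih.1]; ring
    · rw [hs, mtf2List_append, P.2.2, P.2.1, ih.2.1]
    · rw [hs, mtf2Bits_append, P.2.2, ih.2.2]

end ListUpdate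
namespace ListUpdate
open List

def stayActs (s n : ℕ) : List (Action ℕ) := (range' s n).map (fun t => ⟨[], t⟩)
def frontActs (n : ℕ) : List (Action ℕ) := List.replicate n ⟨[], 0⟩

lemma stayActs_succ (s n : ℕ) : stayActs s (n+1) = ⟨[], s⟩ :: stayActs (s+1) n := by
  simp [stayActs, List.range'_succ]

lemma frontActs_succ3 (n : ℕ) :
    frontActs (3*(n+1)) = ⟨[],0⟩ :: ⟨[],0⟩ :: ⟨[],0⟩ :: frontActs (3*n) := by
  rw [frontActs, show 3*(n+1) = 3+3*n by ring, List.replicate_add]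
  rfl

@[simp] lemma stayActs_length (s n : ℕ) : (stayActs s n).length = n := by
  simp [stayActs]

@[simp] lemma frontActs_length (n : ℕ) : (frontActs n).length = n := by
  simp [frontActs]

@[simp] lemma dupEach_length (L : List ℕ) : (dupEach 3 L).length = 3 * L.length := by
  induction L with
  | nil => simp [dupEach]
  | cons x t ih => rw [dupEach_cons]; simp [ih]; ring

lemma freeMove_cons_front (n : ℕ) (X : List ℕ) : freeMove (n :: X) n 0 = n :: X := by
  rw [freeMove_front]; simp

lemma servA (k : ℕ) : ∀ n : ℕ,
    2 * serveCost 1 (range (n+k)) (range' n k) (stayActs n k) = 2*n*k + k*(k+1)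
    ∧ serveList (range (n+k)) (range' n k) (stayActs n k) = range (n+k) := by
  induction k with
  | zero => intro n; exact ⟨by simp [serveCost], by simp [serveList]⟩
  | succ k ih =>
    intro n
    have hσ : range' n (k+1) = n :: range' (n+1) k := List.range'_succ (s := n) (n := k) (step := 1)
    have hacts : stayActs n (k+1) = ⟨[], n⟩ :: stayActs (n+1) k := stayActs_succ n k
    have hsplit : range (n+(k+1)) = range n ++ n :: range' (n+1) k := by
      rw [range_decomp, List.range'_succ (s := n) (n := k) (step := 1)]
    have hidx : (range (n+(k+1))).idxOf n = n := by
      rw [hsplit, indexOf_middle (by simp)]; simp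
    have hmem : n ∈ range (n+(k+1)) := by simp
    have hfm : freeMove (range (n+(k+1))) n n = range (n+(k+1)) := freeMove_self hmem hidx
    have harith : n + (k+1) = (n+1) + k := by omega
    refine ⟨?_, ?_⟩
    · rw [hσ, hacts, serveCost_step, hidx, hfm, harith, Nat.mul_add, (ih (n+1)).1]
      ring
    · rw [hσ, hacts, serveList_step, hfm, harith, (ih (n+1)).2]

lemma servB (k : ℕ) : ∀ n : ℕ,
    2 * serveCost 1 ((range n).reverse ++ range' n k) (dupEach 3 (range' n k))
        (frontActs (3*k)) = k*(2*n+k+5)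
    ∧ serveList ((range n).reverse ++ range' n k) (dupEach 3 (range' n k))
        (frontActs (3*k)) = (range (n+k)).reverse := by
  induction k with
  | zero =>
    intro n
    exact ⟨by simp [serveCost, dupEach, frontActs], by simp [serveList, dupEach, frontActs]⟩
  | succ k ih =>
    intro n
    have hσ : dupEach 3 (range' n (k+1)) = n :: n :: n :: dupEach 3 (range' (n+1) k) := by
      rw [List.range'_succ (s := n) (n := k) (step := 1), dupEach_cons]
    have hL : ((range n).reverse ++ range' n (k+1) : List ℕ)
        = (range n).reverse ++ n :: range' (n+1) k := by rw [List.range'_succ (s := n) (n := k) (step := 1)]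
    have hnm : n ∉ (range n).reverse := by simp
    have hidx : ((range n).reverse ++ n :: range' (n+1) k).idxOf n = n := by
      rw [indexOf_middle hnm]; simp
    have hfm1 : freeMove ((range n).reverse ++ n :: range' (n+1) k) n 0
        = n :: ((range n).reverse ++ range' (n+1) k) := by
      rw [freeMove_front, erase_middle hnm]
    have hl : ((n : ℕ) :: ((range n).reverse ++ range' (n+1) k))
        = (range (n+1)).reverse ++ range' (n+1) k := by simp [List.range_succ]
    refine ⟨?_, ?_⟩
    · rw [hσ, hL, frontActs_succ3, serveCost_step, hidx, hfm1,
        serveCost_step, List.idxOf_cons_self, freeMove_cons_front,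
        serveCost_step, List.idxOf_cons_self, freeMove_cons_front, hl,
        Nat.mul_add]
      simp only [Nat.mul_add]
      rw [(ih (n+1)).1]
      ring
    · rw [hσ, hL, frontActs_succ3, serveList_step, hfm1,
        serveList_step, freeMove_cons_front, serveList_step, freeMove_cons_front, hl,
        (ih (n+1)).2]
      rw [show n + (k+1) = (n+1) + k by omega]

lemma servC (n : ℕ) : ∀ k : ℕ,
    2 * serveCost 1 ((range (n+k)).reverse) ((range n).reverse) (stayActs k n)
        = 2*n*k + n*(n+1)
    ∧ serveList ((range (n+k)).reverse) ((range n).reverse) (stayActs k n)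
        = (range (n+k)).reverse := by
  induction n with
  | zero => intro k; exact ⟨by simp [serveCost, stayActs], by simp [serveList, stayActs]⟩
  | succ n ih =>
    intro k
    have hσ : ((range (n+1)).reverse : List ℕ) = n :: (range n).reverse := by
      simp [List.range_succ]
    have hacts : stayActs k (n+1) = ⟨[], k⟩ :: stayActs (k+1) n := stayActs_succ k n
    have hsplit : ((range ((n+1)+k)).reverse : List ℕ)
        = (range' (n+1) k).reverse ++ (n :: (range n).reverse) := by
      rw [range_decomp (n+1) k, List.reverse_append]; simp [List.range_succ]
    have hnm : n ∉ (range' (n+1) k).reverse := by simp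
    have hidx : ((range' (n+1) k).reverse ++ n :: (range n).reverse).idxOf n = k := by
      rw [indexOf_middle hnm]; simp
    have hmem : n ∈ (range' (n+1) k).reverse ++ n :: (range n).reverse := by simp
    have hfm : freeMove ((range' (n+1) k).reverse ++ n :: (range n).reverse) n k
        = (range' (n+1) k).reverse ++ n :: (range n).reverse := freeMove_self hmem hidx
    have hback : ((range' (n+1) k).reverse ++ n :: (range n).reverse : List ℕ)
        = (range (n+(k+1))).reverse := by
      rw [show n+(k+1) = (n+1)+k by omega]; exact hsplit.symm
    refine ⟨?_, ?_⟩
    · rw [hσ, hacts, hsplit, serveCost_step, hidx, hfm, hback, Nat.mul_add, (ih (k+1)).1]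
      ring
    · rw [hσ, hacts, hsplit, serveList_step, hfm, hback, (ih (k+1)).2]
      try rw [show n + (k+1) = (n+1) + k by omega]

lemma servD (n : ℕ) : ∀ k : ℕ,
    2 * serveCost 1 (range' n k ++ (range n).reverse) (dupEach 3 ((range n).reverse))
        (frontActs (3*n)) = n*(2*k+n+5)
    ∧ serveList (range' n k ++ (range n).reverse) (dupEach 3 ((range n).reverse))
        (frontActs (3*n)) = range (n+k) := by
  induction n with
  | zero =>
    intro k
    refine ⟨by simp [serveCost, dupEach, frontActs], ?_⟩
    simp [serveList, dupEach, frontActs, List.range_eq_range']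
  | succ n ih =>
    intro k
    have hσ : ((range (n+1)).reverse : List ℕ) = n :: (range n).reverse := by
      simp [List.range_succ]
    have hnm : n ∉ range' (n+1) k := by simp
    have hidx : (range' (n+1) k ++ n :: (range n).reverse).idxOf n = k := by
      rw [indexOf_middle hnm]; simp
    have hfm1 : freeMove (range' (n+1) k ++ n :: (range n).reverse) n 0
        = n :: (range' (n+1) k ++ (range n).reverse) := by
      rw [freeMove_front, erase_middle hnm]
    have hl : ((n : ℕ) :: (range' (n+1) k ++ (range n).reverse))
        = range' n (k+1) ++ (range n).reverse := by
      rw [List.range'_succ (s := n) (n := k) (step := 1)]; rfl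
    refine ⟨?_, ?_⟩
    · rw [hσ, dupEach_cons, frontActs_succ3, serveCost_step, hidx, hfm1,
        serveCost_step, List.idxOf_cons_self, freeMove_cons_front,
        serveCost_step, List.idxOf_cons_self, freeMove_cons_front, hl,
        Nat.mul_add]
      simp only [Nat.mul_add]
      rw [(ih (k+1)).1]
      ring
    · rw [hσ, dupEach_cons, frontActs_succ3, serveList_step, hfm1,
        serveList_step, freeMove_cons_front, serveList_step, freeMove_cons_front, hl,
        (ih (k+1)).2]
      rw [show n + (k+1) = (n+1) + k by omega]

end ListUpdate
namespace ListUpdate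
open List

def phaseActs (l : ℕ) : List (Action ℕ) :=
  stayActs 0 l ++ (frontActs (3*l) ++ (stayActs 0 l ++ frontActs (3*l)))

lemma phaseActs_length (l : ℕ) : (phaseActs l).length = (phaseDelta l).length := by
  simp [phaseActs, phaseDelta]; try ring

lemma opt_phase (l : ℕ) :
    serveCost 1 (range l) (phaseDelta l) (phaseActs l) = 2*l^2+6*l
    ∧ serveList (range l) (phaseDelta l) (phaseActs l) = range l := by
  have A := servA l 0
  have B := servB l 0
  have C := servC l 0
  have D := servD l 0
  simp only [Nat.zero_add, Nat.add_zero, Nat.mul_zero, Nat.zero_mul, List.range_zero,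
    List.reverse_nil, List.nil_append, List.append_nil, List.range'_zero,
    ← List.range_eq_range'] at A B C D
  have hφ : phaseDelta l = range l ++ (dupEach 3 (range l) ++
      ((range l).reverse ++ dupEach 3 ((range l).reverse))) := by
    simp [phaseDelta]
  constructor
  · rw [hφ, phaseActs, serveCost_append _ _ _ _ _ _ (by simp), A.2,
      serveCost_append _ _ _ _ _ _ (by simp), B.2,
      serveCost_append _ _ _ _ _ _ (by simp), C.2]
    apply Nat.eq_of_mul_eq_mul_left (show 0 < 2 by norm_num)
    calc 2*(serveCost 1 (range l) (range l) (stayActs 0 l)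
          + (serveCost 1 (range l) (dupEach 3 (range l)) (frontActs (3*l))
          + (serveCost 1 ((range l).reverse) ((range l).reverse) (stayActs 0 l)
          + serveCost 1 ((range l).reverse) (dupEach 3 ((range l).reverse)) (frontActs (3*l)))))
        = 2*(serveCost 1 (range l) (range l) (stayActs 0 l))
          + 2*(serveCost 1 (range l) (dupEach 3 (range l)) (frontActs (3*l)))
          + 2*(serveCost 1 ((range l).reverse) ((range l).reverse) (stayActs 0 l))
          + 2*(serveCost 1 ((range l).reverse) (dupEach 3 ((range l).reverse)) (frontActs (3*l)))
          := by ring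
      _ = l*(l+1) + l*(l+5) + l*(l+1) + l*(l+5) := by rw [A.1, B.1, C.1, D.1]
      _ = 2*(2*l^2+6*l) := by ring
  · rw [hφ, phaseActs, serveList_append _ _ _ _ _ (by simp), A.2,
      serveList_append _ _ _ _ _ (by simp), B.2,
      serveList_append _ _ _ _ _ (by simp), C.2, D.2]

def sigmaActs (l m : ℕ) : List (Action ℕ) := (List.replicate m (phaseActs l)).flatten

lemma opt_total (l m : ℕ) :
    serveCost 1 (range l) (sigmaDelta l m) (sigmaActs l m) = m*(2*l^2+6*l)
    ∧ serveList (range l) (sigmaDelta l m) (sigmaActs l m) = range l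
    ∧ (sigmaActs l m).length = (sigmaDelta l m).length := by
  induction m with
  | zero =>
    exact ⟨by simp [sigmaDelta, sigmaActs, serveCost], by simp [sigmaDelta, sigmaActs, serveList],
      by simp [sigmaDelta, sigmaActs]⟩
  | succ m ih =>
    have hs : sigmaDelta l (m+1) = phaseDelta l ++ sigmaDelta l m := by
      simp [sigmaDelta, List.replicate_succ]
    have ha : sigmaActs l (m+1) = phaseActs l ++ sigmaActs l m := by
      simp [sigmaActs, List.replicate_succ]
    have P := opt_phase l
    refine ⟨?_, ?_, ?_⟩
    · rw [hs, ha, serveCost_append _ _ _ _ _ _ (phaseActs_length l), P.2, P.1, ih.1]; ring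
    · rw [hs, ha, serveList_append _ _ _ _ _ (phaseActs_length l), P.2, ih.2.1]
    · simp [hs, ha, phaseActs_length l, ih.2.2]

end ListUpdate
/-- Under the full cost model, `MTFO(σ_δ) = m·(5l² + 3l)` and
`OPT(σ_δ) ≤ m·(2l² + 6l)`. -/
theorem costs_on_sigma_delta (l m : ℕ) :
    mtfoCost 1 (List.range l) (sigmaDelta l m) = m * (5 * l ^ 2 + 3 * l) ∧
    optCost 1 (List.range l) (sigmaDelta l m) ≤ m * (2 * l ^ 2 + 6 * l) := by
  constructor
  · exact (ListUpdate.mtfo_total l m).1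
  · exact Nat.sInf_le ⟨ListUpdate.sigmaActs l m, (ListUpdate.opt_total l m).2.2,
      (ListUpdate.opt_total l m).1⟩
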